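/- Let (Ω, m, σ) be ergodic and invertible, suppose log λ_{ω,0} and log λ_{ω,ε} are in L¹(m), and suppose that for a fixed ε the normalized survival probabilities satisfy μ_{ω,0}(X_{ω,N,ε}) = (λ_{ω,ε}^{N+1}/λ_{ω,0}^{N+1}) (c_{ω,ε} + r_{ω,N,ε}) where c_{ω,ε} > 0 and r_{ω,N,ε} → 0 as N → ∞ with |r_{ω,N,ε}| bounded. Then the escape rate exists and R_ε(μ_{ω,0}) := −lim_{N→∞} (1/N) log μ_{ω,0}(X_{ω,N,ε}) = ∫_Ω log λ_{ω,0} dm − ∫_Ω log λ_{ω,ε} dm for m-a.e. ω; in particular the escape rate is ω-independent. -/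

import Mathlib

open MeasureTheory Filter Set

set_option linter.unusedSectionVars false
set_option linter.unusedVariables false

section BirkhoffErgodic

variable {Ω : Type*} [MeasurableSpace Ω] {m : Measure Ω}


/-- running maximum of Birkhoff sums `S_1, ..., S_n` together with `0`. -/
private def maxSum (σ : Ω → Ω) (g : Ω → ℝ) : ℕ → Ω → ℝ
  | 0 => fun _ => 0
  | n + 1 => fun x => max (birkhoffSum σ g (n + 1) x) (maxSum σ g n x)

private lemma maxSum_nonneg (σ : Ω → Ω) (g : Ω → ℝ) (n : ℕ) (x : Ω) :
    0 ≤ maxSum σ g n x := by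
  induction n with
  | zero => simp [maxSum]
  | succ n ih => exact le_trans ih (le_max_right _ _)

private lemma maxSum_mono (σ : Ω → Ω) (g : Ω → ℝ) (x : Ω) :
    Monotone fun n => maxSum σ g n x :=
  monotone_nat_of_le_succ fun n => le_max_right _ _

private lemma birkhoffSum_le_maxSum (σ : Ω → Ω) (g : Ω → ℝ) (n : ℕ) (x : Ω) :
    birkhoffSum σ g n x ≤ maxSum σ g n x := by
  cases n with
  | zero => simp [maxSum, birkhoffSum_zero]
  | succ n => exact le_max_left _ _

private lemma maxSum_le (σ : Ω → Ω) (g : Ω → ℝ) (n : ℕ) (x : Ω) :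
    maxSum σ g n x ≤ max 0 (g x + maxSum σ g n (σ x)) := by
  induction n with
  | zero => simp [maxSum]
  | succ n ih =>
    refine max_le ?_ ?_
    · rw [birkhoffSum_succ' σ g n x]
      refine le_max_of_le_right (add_le_add le_rfl ?_)
      exact (birkhoffSum_le_maxSum σ g n (σ x)).trans (maxSum_mono σ g (σ x) (Nat.le_succ n))
    · refine ih.trans (max_le_max le_rfl (add_le_add le_rfl ?_))
      exact maxSum_mono σ g (σ x) (Nat.le_succ n)

private lemma measurable_birkhoffSum {σ : Ω → Ω} (hσ : Measurable σ) {g : Ω → ℝ}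
    (hg : Measurable g) (n : ℕ) : Measurable (birkhoffSum σ g n) := by
  unfold birkhoffSum
  exact Finset.measurable_sum _ fun k _ => hg.comp (hσ.iterate k)

private lemma measurable_maxSum {σ : Ω → Ω} (hσ : Measurable σ) {g : Ω → ℝ}
    (hg : Measurable g) (n : ℕ) : Measurable (maxSum σ g n) := by
  induction n with
  | zero => exact measurable_const
  | succ n ih => exact (measurable_birkhoffSum hσ hg (n + 1)).max ih

private lemma integrable_birkhoffSum {σ : Ω → Ω} (hσ : MeasurePreserving σ m m) {g : Ω → ℝ}
    (hg : Integrable g m) (n : ℕ) : Integrable (birkhoffSum σ g n) m := by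
  unfold birkhoffSum
  refine integrable_finset_sum _ fun k _ => ?_
  exact ((hσ.iterate k).integrable_comp hg.aestronglyMeasurable).2 hg

private lemma integrable_maxSum {σ : Ω → Ω} (hσ : MeasurePreserving σ m m) {g : Ω → ℝ}
    (hg : Integrable g m) (n : ℕ) : Integrable (maxSum σ g n) m := by
  induction n with
  | zero =>
    refine (integrable_zero _ _ _).congr (Filter.Eventually.of_forall fun x => ?_)
    simp [maxSum]
  | succ n ih =>
    have h := (integrable_birkhoffSum hσ hg (n + 1)).sup ih
    exact h.congr (Filter.Eventually.of_forall fun x => by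
      simp [maxSum, Pi.sup_apply])

/-- The maximal ergodic theorem, in the form we need: if almost every point has some
positive Birkhoff sum, then the integral of `g` is nonnegative. -/
private lemma maximal_ergodic {σ : Ω → Ω} (hσ : MeasurePreserving σ m m)
    [IsFiniteMeasure m] {g : Ω → ℝ} (hgm : Measurable g) (hgi : Integrable g m)
    (hcon : ∀ᵐ x ∂m, ∃ n : ℕ, 0 < birkhoffSum σ g (n + 1) x) :
    0 ≤ ∫ x, g x ∂m := by
  set E : ℕ → Set Ω := fun n => {x | 0 < maxSum σ g n x} with hE
  have hEm : ∀ n, MeasurableSet (E n) := fun n =>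
    measurableSet_lt measurable_const (measurable_maxSum hσ.measurable hgm n)
  have hmono : Monotone E := fun i j hij x hx =>
    lt_of_lt_of_le hx (maxSum_mono σ g x hij)
  -- each set integral is nonnegative
  have key : ∀ n, 0 ≤ ∫ x in E n, g x ∂m := by
    intro n
    have hMi := integrable_maxSum hσ hgi n
    have hMci : Integrable (fun x => maxSum σ g n (σ x)) m :=
      (hσ.integrable_comp (hMi.aestronglyMeasurable)).2 hMi
    have h1 : ∀ x ∈ E n, maxSum σ g n x - maxSum σ g n (σ x) ≤ g x := by
      intro x hx
      have h2 := maxSum_le σ g n x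
      rcases le_max_iff.1 h2 with h | h
      · exact absurd (lt_of_lt_of_le hx h) (lt_irrefl 0)
      · linarith
    have step1 : ∫ x in E n, (maxSum σ g n x - maxSum σ g n (σ x)) ∂m ≤ ∫ x in E n, g x ∂m := by
      refine setIntegral_mono_on (hMi.integrableOn.sub hMci.integrableOn)
        hgi.integrableOn (hEm n) h1
    have split : ∫ x in E n, (maxSum σ g n x - maxSum σ g n (σ x)) ∂m
        = (∫ x in E n, maxSum σ g n x ∂m) - ∫ x in E n, maxSum σ g n (σ x) ∂m :=
      integral_sub hMi.integrableOn hMci.integrableOn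
    have e1 : ∫ x in E n, maxSum σ g n x ∂m = ∫ x, maxSum σ g n x ∂m := by
      rw [← integral_add_compl (hEm n) hMi]
      have : ∫ x in (E n)ᶜ, maxSum σ g n x ∂m = 0 := by
        rw [setIntegral_congr_fun (hEm n).compl (g := fun _ => (0:ℝ))
          (fun x hx => le_antisymm (not_lt.1 hx) (maxSum_nonneg σ g n x))]
        simp
      rw [this, add_zero]
    have e2 : ∫ x in E n, maxSum σ g n (σ x) ∂m ≤ ∫ x, maxSum σ g n (σ x) ∂m :=
      setIntegral_le_integral hMci (Filter.Eventually.of_forall fun x => maxSum_nonneg σ g n _)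
    have e3 : ∫ x, maxSum σ g n (σ x) ∂m = ∫ x, maxSum σ g n x ∂m := by
      conv_rhs => rw [← hσ.map_eq]
      exact (integral_map hσ.measurable.aemeasurable
        ((measurable_maxSum hσ.measurable hgm n).aestronglyMeasurable)).symm
    refine le_trans ?_ step1
    rw [split, e1]
    linarith [e2.trans_eq e3]
  -- pass to the limit
  have hUnion : m (⋃ n, E n)ᶜ = 0 := by
    have hsub : {x | ∃ n : ℕ, 0 < birkhoffSum σ g (n + 1) x} ⊆ ⋃ n, E n := by
      rintro x ⟨n, hn⟩
      exact Set.mem_iUnion.2 ⟨n + 1, lt_of_lt_of_le hn (birkhoffSum_le_maxSum σ g (n + 1) x)⟩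
    have := hcon
    rw [ae_iff] at this
    refine measure_mono_null ?_ this
    intro x hx
    exact fun h => hx (hsub h)
  have hT := tendsto_setIntegral_of_monotone hEm hmono hgi.integrableOn
  have hlim : 0 ≤ ∫ x in ⋃ n, E n, g x ∂m := ge_of_tendsto' hT key
  calc (0:ℝ) ≤ ∫ x in ⋃ n, E n, g x ∂m := hlim
    _ = ∫ x, g x ∂m := by
        rw [← integral_add_compl (MeasurableSet.iUnion hEm) hgi]
        rw [setIntegral_measure_zero _ hUnion, add_zero]


/-- One-sided ergodic bound: if `∫ g < α` then a.e. the Birkhoff sums of `g - α`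
are bounded above. -/
private lemma birkhoff_upper {σ : Ω → Ω} (hσ : Ergodic σ m) [IsProbabilityMeasure m]
    {g : Ω → ℝ} (hgm : Measurable g) (hgi : Integrable g m) {α : ℝ}
    (hα : ∫ x, g x ∂m < α) :
    ∀ᵐ x ∂m, ∃ M : ℝ, ∀ n : ℕ, birkhoffSum σ g (n + 1) x ≤ (n + 1 : ℝ) * α + M := by
  set h : Ω → ℝ := fun x => g x - α with hh
  have hhm : Measurable h := hgm.sub measurable_const
  have hhi : Integrable h m := hgi.sub (integrable_const α)
  have hint : ∫ x, h x ∂m < 0 := by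
    rw [hh]
    rw [integral_sub hgi (integrable_const α), integral_const]
    simp only [measure_univ, ENNReal.toReal_one, probReal_univ, one_smul, smul_eq_mul, one_mul]
    linarith
  have hS : ∀ n x, birkhoffSum σ h n x = birkhoffSum σ g n x - n * α := by
    intro n x
    unfold birkhoffSum
    rw [Finset.sum_sub_distrib]
    simp [hh, mul_comm]
  -- the set of unbounded Birkhoff sums of h
  set A : Set Ω := ⋂ M : ℕ, ⋃ n : ℕ, {x | (M : ℝ) < birkhoffSum σ h (n + 1) x} with hA
  have hAm : MeasurableSet A := by
    refine MeasurableSet.iInter fun M => MeasurableSet.iUnion fun n => ?_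
    exact measurableSet_lt measurable_const
      (by unfold birkhoffSum
          exact Finset.measurable_sum _ fun k _ => hhm.comp (hσ.measurable.iterate k))
  have hmemA : ∀ x, x ∈ A ↔ ∀ M : ℝ, ∃ n : ℕ, M < birkhoffSum σ h (n + 1) x := by
    intro x
    constructor
    · intro hx M
      obtain ⟨K, hK⟩ := exists_nat_gt M
      obtain ⟨n, hn⟩ := Set.mem_iUnion.1 (Set.mem_iInter.1 hx K)
      exact ⟨n, lt_trans hK hn⟩
    · intro hx
      exact Set.mem_iInter.2 fun M => Set.mem_iUnion.2 (hx M)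
  -- exact invariance
  have hinv : σ ⁻¹' A = A := by
    ext x
    simp only [Set.mem_preimage, hmemA]
    have hrec : ∀ n : ℕ, birkhoffSum σ h (n + 1) (σ x) = birkhoffSum σ h (n + 2) x - h x := by
      intro n
      rw [birkhoffSum_succ' σ h (n + 1) x]
      ring
    constructor
    · intro hx M
      obtain ⟨n, hn⟩ := hx (M - h x)
      rw [hrec n] at hn
      exact ⟨n + 1, by linarith⟩
    · intro hx M
      obtain ⟨n, hn⟩ := hx (max (M + h x) (birkhoffSum σ h 1 x))
      have hn1 : n ≠ 0 := by
        rintro rfl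
        exact absurd hn (not_lt.2 (le_max_right _ _))
      obtain ⟨k, rfl⟩ := Nat.exists_eq_succ_of_ne_zero hn1
      refine ⟨k, ?_⟩
      rw [hrec k]
      have := lt_of_le_of_lt (le_max_left (M + h x) (birkhoffSum σ h 1 x)) hn
      have : M + h x < birkhoffSum σ h (k + 2) x := this
      linarith
  -- ergodicity: A is null
  have hA0 : m A = 0 := by
    rcases hσ.toPreErgodic.prob_eq_zero_or_one hAm hinv with h0 | h1
    · exact h0
    · exfalso
      have hcon : ∀ᵐ x ∂m, ∃ n : ℕ, 0 < birkhoffSum σ h (n + 1) x := by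
        have : ∀ᵐ x ∂m, x ∈ A := by
          rw [ae_iff]
          simpa using (by
            have : m Aᶜ = 0 := by
              have := prob_compl_eq_one_sub hAm (μ := m)
              rw [h1] at this; simpa using this
            exact this)
        filter_upwards [this] with x hx
        exact (hmemA x).1 hx 0
      have := maximal_ergodic hσ.toMeasurePreserving hhm hhi hcon
      linarith
  -- conclude
  have : ∀ᵐ x ∂m, x ∉ A := by
    rw [ae_iff]; simpa using hA0
  filter_upwards [this] with x hx
  rw [hmemA] at hx
  push_neg at hx
  obtain ⟨M, hM⟩ := hx
  refine ⟨M, fun n => ?_⟩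
  have := hM n
  rw [hS] at this
  push_cast at this ⊢
  linarith

/-- Birkhoff ergodic theorem (measurable version). -/
private lemma birkhoff_tendsto_meas {σ : Ω → Ω} (hσ : Ergodic σ m) [IsProbabilityMeasure m]
    {g : Ω → ℝ} (hgm : Measurable g) (hgi : Integrable g m) :
    ∀ᵐ x ∂m, Tendsto (fun n : ℕ => birkhoffSum σ g n x / n) atTop (nhds (∫ x, g x ∂m)) := by
  set I : ℝ := ∫ x, g x ∂m with hI
  have hup : ∀ᵐ x ∂m, ∀ q : ℚ, I < q →
      ∃ M : ℝ, ∀ n : ℕ, birkhoffSum σ g (n + 1) x ≤ (n + 1 : ℝ) * q + M := by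
    rw [ae_all_iff]
    intro q
    by_cases hq : I < q
    · exact (birkhoff_upper hσ hgm hgi hq).mono fun x hx _ => hx
    · exact Filter.Eventually.of_forall fun x h => absurd h hq
  have hlo : ∀ᵐ x ∂m, ∀ q : ℚ, (q : ℝ) < I →
      ∃ M : ℝ, ∀ n : ℕ, (n + 1 : ℝ) * q - M ≤ birkhoffSum σ g (n + 1) x := by
    rw [ae_all_iff]
    intro q
    by_cases hq : (q : ℝ) < I
    · have hneg : ∫ x, (fun y => -g y) x ∂m < -q := by
        rw [integral_neg]; linarith
      have hbu := birkhoff_upper hσ hgm.neg hgi.neg hneg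
      refine hbu.mono fun x hx _ => ?_
      obtain ⟨M, hM⟩ := hx
      refine ⟨M, fun n => ?_⟩
      have := hM n
      have hneg2 : birkhoffSum σ (-g) (n + 1) x = -birkhoffSum σ g (n + 1) x := by
        unfold birkhoffSum; rw [← Finset.sum_neg_distrib]; rfl
      rw [hneg2] at this
      linarith
    · exact Filter.Eventually.of_forall fun x h => absurd h hq
  filter_upwards [hup, hlo] with x hux hlx
  rw [tendsto_order]
  constructor
  · intro b hb
    obtain ⟨q, hq1, hq2⟩ := exists_rat_btwn hb
    obtain ⟨M, hM⟩ := hlx q hq2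
    have hM0 : Tendsto (fun n : ℕ => (q : ℝ) + (-M) / n) atTop (nhds ((q : ℝ) + 0)) :=
      tendsto_const_nhds.add (Tendsto.div_atTop tendsto_const_nhds tendsto_natCast_atTop_atTop)
    rw [add_zero] at hM0
    filter_upwards [hM0.eventually (eventually_gt_nhds hq1), eventually_ge_atTop 1]
      with n hn hn1
    rcases Nat.exists_eq_succ_of_ne_zero (show n ≠ 0 by omega) with ⟨k, rfl⟩
    have hnpos : (0 : ℝ) < ((k + 1 : ℕ) : ℝ) := by positivity
    refine lt_of_lt_of_le hn ?_
    rw [le_div_iff₀ hnpos]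
    have hb1 := hM k
    have hk0 : ((k : ℝ) + 1) ≠ 0 := by positivity
    have hexp : ((q : ℝ) + -M / ((k : ℝ) + 1)) * ((k : ℝ) + 1) = ((k : ℝ) + 1) * q - M := by
      field_simp; ring
    push_cast
    rw [hexp]
    exact hb1
  · intro b hb
    obtain ⟨q, hq1, hq2⟩ := exists_rat_btwn hb
    obtain ⟨M, hM⟩ := hux q hq1
    have hM0 : Tendsto (fun n : ℕ => (q : ℝ) + M / n) atTop (nhds ((q : ℝ) + 0)) :=
      tendsto_const_nhds.add (Tendsto.div_atTop tendsto_const_nhds tendsto_natCast_atTop_atTop)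
    rw [add_zero] at hM0
    filter_upwards [hM0.eventually (eventually_lt_nhds hq2), eventually_ge_atTop 1]
      with n hn hn1
    rcases Nat.exists_eq_succ_of_ne_zero (show n ≠ 0 by omega) with ⟨k, rfl⟩
    have hnpos : (0 : ℝ) < ((k + 1 : ℕ) : ℝ) := by positivity
    refine lt_of_le_of_lt ?_ hn
    rw [div_le_iff₀ hnpos]
    have hb1 := hM k
    have hk0 : ((k : ℝ) + 1) ≠ 0 := by positivity
    have hexp : ((q : ℝ) + M / ((k : ℝ) + 1)) * ((k : ℝ) + 1) = ((k : ℝ) + 1) * q + M := by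
      field_simp
    push_cast
    rw [hexp]
    linarith [hb1]

/-- Birkhoff ergodic theorem, for integrable (not necessarily measurable) functions. -/
private lemma birkhoff_tendsto {σ : Ω → Ω} (hσ : Ergodic σ m) [IsProbabilityMeasure m]
    {g : Ω → ℝ} (hgi : Integrable g m) :
    ∀ᵐ x ∂m, Tendsto (fun n : ℕ => birkhoffSum σ g n x / n) atTop (nhds (∫ x, g x ∂m)) := by
  set g' : Ω → ℝ := hgi.1.mk g with hg'
  have hg'm : Measurable g' := hgi.1.stronglyMeasurable_mk.measurable
  have hae : g =ᵐ[m] g' := hgi.1.ae_eq_mk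
  have hg'i : Integrable g' m := hgi.congr hae
  have horb : ∀ᵐ x ∂m, ∀ j : ℕ, g (σ^[j] x) = g' (σ^[j] x) := by
    rw [ae_all_iff]
    intro j
    exact (hσ.toMeasurePreserving.iterate j).quasiMeasurePreserving.ae_eq_comp hae
  have hint : ∫ x, g x ∂m = ∫ x, g' x ∂m := integral_congr_ae hae
  filter_upwards [horb, birkhoff_tendsto_meas hσ hg'm hg'i] with x hx ht
  rw [hint]
  refine ht.congr fun n => ?_
  unfold birkhoffSum
  rw [Finset.sum_congr rfl fun k _ => (hx k).symm]

end BirkhoffErgodic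

open MeasureTheory Filter

theorem stmt12 {Ω : Type*} [MeasurableSpace Ω] (m : Measure Ω) [IsProbabilityMeasure m]
    (σ : Ω → Ω) (hσ : Ergodic σ m) (hbij : Function.Bijective σ)
    (lam0 lame : Ω → ℝ) (h0pos : ∀ ω, 0 < lam0 ω) (hepos : ∀ ω, 0 < lame ω)
    (hint0 : Integrable (fun ω => Real.log (lam0 ω)) m)
    (hinte : Integrable (fun ω => Real.log (lame ω)) m)
    (P : Ω → ℕ → ℝ) (c : Ω → ℝ) (r : Ω → ℕ → ℝ) (R : ℝ)
    (hc : ∀ ω, 0 < c ω)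
    (hr : ∀ ω, Tendsto (fun N => r ω N) atTop (nhds 0))
    (hrbd : ∀ ω N, |r ω N| ≤ R)
    (hP : ∀ ω N, P ω N =
      ((∏ j ∈ Finset.range (N + 1), lame (σ^[j] ω)) /
        ∏ j ∈ Finset.range (N + 1), lam0 (σ^[j] ω)) * (c ω + r ω N)) :
    ∀ᵐ ω ∂m, Tendsto (fun N : ℕ => -(1 / (N : ℝ)) * Real.log (P ω N)) atTop
      (nhds ((∫ ω, Real.log (lam0 ω) ∂m) - ∫ ω, Real.log (lame ω) ∂m)) := by
  set a : Ω → ℝ := fun ω => Real.log (lam0 ω) with ha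
  set b : Ω → ℝ := fun ω => Real.log (lame ω) with hb
  filter_upwards [birkhoff_tendsto hσ hint0, birkhoff_tendsto hσ hinte] with ω hA hB
  set A : ℝ := ∫ ω, a ω ∂m
  set B : ℝ := ∫ ω, b ω ∂m
  -- log of the products are Birkhoff sums
  have hlogb : ∀ N : ℕ, Real.log (∏ j ∈ Finset.range (N + 1), lame (σ^[j] ω))
      = birkhoffSum σ b (N + 1) ω := by
    intro N
    rw [Real.log_prod fun j _ => (hepos _).ne']
    rfl
  have hloga : ∀ N : ℕ, Real.log (∏ j ∈ Finset.range (N + 1), lam0 (σ^[j] ω))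
      = birkhoffSum σ a (N + 1) ω := by
    intro N
    rw [Real.log_prod fun j _ => (h0pos _).ne']
    rfl
  -- the ratio tendsto pieces
  have hrat : Tendsto (fun N : ℕ => ((N : ℝ) + 1) / N) atTop (nhds 1) := by
    have h1 : Tendsto (fun N : ℕ => 1 + 1 / (N : ℝ)) atTop (nhds (1 + 0)) :=
      tendsto_const_nhds.add (Tendsto.div_atTop tendsto_const_nhds tendsto_natCast_atTop_atTop)
    rw [add_zero] at h1
    refine h1.congr' ?_
    filter_upwards [eventually_ge_atTop 1] with N hN
    have hN0 : (N : ℝ) ≠ 0 := by positivity -- wrong; fix below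
    field_simp
  have key : ∀ (u : Ω → ℝ), Tendsto (fun n : ℕ => birkhoffSum σ u n ω / n) atTop
      (nhds (∫ ω, u ω ∂m)) →
      Tendsto (fun N : ℕ => birkhoffSum σ u (N + 1) ω / N) atTop (nhds (∫ ω, u ω ∂m)) := by
    intro u hu
    have h1 : Tendsto (fun N : ℕ => birkhoffSum σ u (N + 1) ω / (N + 1 : ℕ)) atTop
        (nhds (∫ ω, u ω ∂m)) := hu.comp (tendsto_add_atTop_nat 1)
    have h2 := h1.mul hrat
    rw [mul_one] at h2
    refine h2.congr' ?_
    filter_upwards [eventually_ge_atTop 1] with N hN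
    have hN0 : (N : ℝ) ≠ 0 := Nat.cast_ne_zero.2 (by omega)
    have hN1 : ((N : ℝ) + 1) ≠ 0 := by positivity
    push_cast
    field_simp
  have ta := key a hA
  have tb := key b hB
  -- the log(c+r) term
  have hcr : Tendsto (fun N => c ω + r ω N) atTop (nhds (c ω)) := by
    simpa using (hr ω).const_add (c ω)
  have hlog : Tendsto (fun N => Real.log (c ω + r ω N)) atTop (nhds (Real.log (c ω))) :=
    (Real.continuousAt_log (hc ω).ne').tendsto.comp hcr
  have hlogz : Tendsto (fun N : ℕ => Real.log (c ω + r ω N) / N) atTop (nhds 0) :=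
    Tendsto.div_atTop hlog tendsto_natCast_atTop_atTop
  -- combine
  have hcomb := (ta.sub tb).sub hlogz
  rw [sub_zero] at hcomb
  refine hcomb.congr' ?_
  -- eventual equality
  have hposev : ∀ᶠ N : ℕ in atTop, 0 < c ω + r ω N :=
    hcr.eventually (eventually_gt_nhds (hc ω))
  filter_upwards [hposev, eventually_ge_atTop 1] with N hpos hN
  have hprode : (0 : ℝ) < ∏ j ∈ Finset.range (N + 1), lame (σ^[j] ω) :=
    Finset.prod_pos fun j _ => hepos _
  have hprod0 : (0 : ℝ) < ∏ j ∈ Finset.range (N + 1), lam0 (σ^[j] ω) :=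
    Finset.prod_pos fun j _ => h0pos _
  rw [hP ω N, Real.log_mul (div_pos hprode hprod0).ne' hpos.ne',
    Real.log_div hprode.ne' hprod0.ne', hloga N, hlogb N]
  ring
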